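/- Under the Weierstrass decomposition hypothesis, if for every initial condition Y_0 ∈ ℂ^m the optimal solution Ŷ_k = Q_p J^k (Q_p^*Q_p)^{-1} Q_p^* Y_0 converges to the zero vector as k → ∞, then every eigenvalue a of the matrix J satisfies |a| < 1. -/

import Mathlib

open Matrix Filter Topology

noncomputable section

/-- Euclidean (ℓ²) norm on ℂ-vectors indexed by a finite type. -/
def euclNorm {n : Type*} [Fintype n] (v : n → ℂ) : ℝ :=
  ‖(WithLp.equiv 2 (n → ℂ)).symm v‖

/-- Operator norm of a matrix, induced by the Euclidean norms. -/
def matOpNorm {α β : Type*} [Fintype α] [Fintype β] [DecidableEq β]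
    (A : Matrix α β ℂ) : ℝ :=
  ‖LinearMap.toContinuousLinearMap (Matrix.toEuclideanLin A)‖

lemma euclNorm_smul {n : Type*} [Fintype n] (c : ℂ) (v : n → ℂ) :
    euclNorm (c • v) = ‖c‖ * euclNorm v := by
  unfold euclNorm
  rw [show (WithLp.equiv 2 (n → ℂ)).symm (c • v) = c • (WithLp.equiv 2 (n → ℂ)).symm v from rfl,
    norm_smul]

open scoped ComplexOrder in
lemma star_dotProduct_self_eq_zero {n : Type*} [Fintype n] {w : n → ℂ}
    (h : star w ⬝ᵥ w = 0) : w = 0 :=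
  dotProduct_star_self_eq_zero.mp h

lemma euclNorm_pos {n : Type*} [Fintype n] {v : n → ℂ} (hv : v ≠ 0) : 0 < euclNorm v := by
  unfold euclNorm
  rw [norm_pos_iff]
  simpa using hv

/-- Theorem 3.2 (necessity): if every optimal solution tends to `0`, then every
eigenvalue of `J` lies in the open unit disc. -/
theorem spectrum_lt_one_of_tendsto_zero (p q : ℕ) (hp : 1 ≤ p)
    (F G P Q : Matrix (Fin p ⊕ Fin q) (Fin p ⊕ Fin q) ℂ)
    (J : Matrix (Fin p) (Fin p) ℂ) (H : Matrix (Fin q) (Fin q) ℂ)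
    (hP : IsUnit P) (hQ : IsUnit Q) (hH : IsNilpotent H)
    (hF : P * F * Q = Matrix.fromBlocks 1 0 0 H)
    (hG : P * G * Q = Matrix.fromBlocks J 0 0 1)
    (Qp : Matrix (Fin p ⊕ Fin q) (Fin p) ℂ)
    (hQp : Qp = Q.submatrix id Sum.inl)
    (hconv : ∀ Y0 : (Fin p ⊕ Fin q) → ℂ,
      Tendsto
        (fun k : ℕ =>
          euclNorm (Qp.mulVec ((J ^ k).mulVec (((Qpᴴ * Qp)⁻¹ * Qpᴴ).mulVec Y0))))
        atTop (𝓝 0)) :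
    ∀ a ∈ spectrum ℂ J, ‖a‖ < 1 := by
  intro a ha
  -- extract an eigenvector
  rw [← AlgEquiv.spectrum_eq (Matrix.toLinAlgEquiv' : Matrix (Fin p) (Fin p) ℂ ≃ₐ[ℂ] _),
    ← Module.End.hasEigenvalue_iff_mem_spectrum] at ha
  obtain ⟨v, hv1, hv0⟩ := ha.exists_hasEigenvector
  have hJv : J.mulVec v = a • v := by
    have := Module.End.mem_eigenspace_iff.mp hv1
    simpa using this
  -- `Qp` has trivial kernel
  have hQpinj : ∀ x : Fin p → ℂ, Qp.mulVec x = 0 → x = 0 := by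
    intro x hx
    have hQinj : Function.Injective Q.mulVec :=
      (Matrix.mulVec_injective_iff_isUnit (A := Q)).mpr hQ
    have hkey : Q.mulVec (Sum.elim x 0) = Qp.mulVec x := by
      ext i
      simp [Matrix.mulVec, dotProduct, hQp, Fintype.sum_sum_type]
    have h0 : Q.mulVec (Sum.elim x 0) = Q.mulVec 0 := by
      rw [hkey, hx, Matrix.mulVec_zero]
    funext i
    exact congrFun (hQinj h0) (Sum.inl i)
  -- `Qpᴴ * Qp` is a unit
  have hker : ∀ z : Fin p → ℂ, (Qpᴴ * Qp).mulVec z = 0 → z = 0 := by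
    intro z hz
    apply hQpinj
    have h1 : star (Qp.mulVec z) ⬝ᵥ Qp.mulVec z = 0 := by
      have : star z ⬝ᵥ (Qpᴴ * Qp).mulVec z = 0 := by rw [hz, dotProduct_zero]
      rwa [← Matrix.mulVec_mulVec, Matrix.dotProduct_mulVec, ← Matrix.star_mulVec] at this
    exact star_dotProduct_self_eq_zero h1
  have hunit : IsUnit (Qpᴴ * Qp) := by
    rw [← Matrix.mulVec_injective_iff_isUnit]
    intro x y hxy
    have : (Qpᴴ * Qp).mulVec (x - y) = 0 := by
      rw [Matrix.mulVec_sub, hxy, sub_self]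
    exact sub_eq_zero.mp (hker _ this)
  have hinv : (Qpᴴ * Qp)⁻¹ * (Qpᴴ * Qp) = 1 :=
    Matrix.nonsing_inv_mul _ ((Matrix.isUnit_iff_isUnit_det _).mp hunit)
  -- apply the convergence hypothesis to `Y0 = Qp v`
  have hrec : ∀ k : ℕ, (J ^ k).mulVec (((Qpᴴ * Qp)⁻¹ * Qpᴴ).mulVec (Qp.mulVec v))
      = (a ^ k) • v := by
    intro k
    have hv' : ((Qpᴴ * Qp)⁻¹ * Qpᴴ).mulVec (Qp.mulVec v) = v := by
      rw [Matrix.mulVec_mulVec, Matrix.mul_assoc, hinv, Matrix.one_mulVec]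
    rw [hv']
    induction k with
    | zero => simp
    | succ k ih =>
      rw [pow_succ, ← Matrix.mulVec_mulVec, hJv, Matrix.mulVec_smul, ih, smul_smul,
        pow_succ, mul_comm]
  have hQv : Qp.mulVec v ≠ 0 := fun h => hv0 (hQpinj v h)
  have hc : 0 < euclNorm (Qp.mulVec v) := euclNorm_pos hQv
  have hT : Tendsto (fun k : ℕ => ‖a‖ ^ k * euclNorm (Qp.mulVec v)) atTop (𝓝 0) := by
    have := hconv (Qp.mulVec v)
    refine this.congr fun k => ?_
    rw [hrec k, Matrix.mulVec_smul, euclNorm_smul, norm_pow]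
  by_contra hcon
  push_neg at hcon
  have hle : ∀ k : ℕ, euclNorm (Qp.mulVec v) ≤ ‖a‖ ^ k * euclNorm (Qp.mulVec v) := by
    intro k
    nth_rewrite 1 [← one_mul (euclNorm (Qp.mulVec v))]
    exact mul_le_mul_of_nonneg_right (one_le_pow₀ hcon) hc.le
  have := le_of_tendsto_of_tendsto' tendsto_const_nhds hT hle
  linarith
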